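/- Let $b=1$ and $\bar{\mu}(x)=\frac{1}{x\log(1/x)}\mathbf{1}_{\{x<1/e\}}$. Then $\bar{\mu}(0^+)=\infty$, $\int_0^{1/e}\bar{\mu}(v)\,dv=\infty$, yet $\mathcal{J}:=\int_0^1\exp\left(\int_s^1\bar{\mu}(v)dv\right)ds<\infty$, and the stationary distribution satisfies $\pi([0,x])=1/\log(1/x)$ for all $0<x\leq 1/e$. -/

import Mathlib

open MeasureTheory Filter Topology

noncomputable def esnF : ℝ → ℝ := fun x => 1 / (x * Real.log (1 / x))

noncomputable def esnG : ℝ → ℝ :=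
  fun x => if x < Real.exp (-1) then 1 / (x * Real.log (1 / x)) else 0

lemma esn_c_pos : (0:ℝ) < Real.exp (-1) := Real.exp_pos _

lemma esn_c_lt_one : Real.exp (-1) < 1 := by
  rw [← Real.exp_zero]
  exact Real.exp_lt_exp.mpr (by norm_num)

lemma esn_hasDerivAt {x : ℝ} (hx : 0 < x) (hx1 : x < 1) :
    HasDerivAt (fun y => -Real.log (-Real.log y)) (esnF x) x := by
  have hlx : 0 < -Real.log x := by
    have := Real.log_neg hx hx1
    linarith
  have h1 : HasDerivAt (fun y : ℝ => -Real.log y) (-x⁻¹) x :=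
    (Real.hasDerivAt_log hx.ne').neg
  have h2 : HasDerivAt Real.log (-Real.log x)⁻¹ (-Real.log x) :=
    Real.hasDerivAt_log hlx.ne'
  have h3 := (h2.comp x h1).neg
  refine h3.congr_deriv ?_
  have hlog : Real.log (1 / x) = -Real.log x := by rw [one_div, Real.log_inv]
  unfold esnF; rw [hlog]
  field_simp

lemma esn_contOn {a b : ℝ} (ha : 0 < a) (hb : b < 1) :
    ContinuousOn esnF (Set.Icc a b) := by
  intro x hx
  have hx0 : 0 < x := lt_of_lt_of_le ha hx.1
  have hx1 : x < 1 := lt_of_le_of_lt hx.2 hb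
  have hlx : 0 < -Real.log x := by
    have := Real.log_neg hx0 hx1
    linarith
  have hden : x * Real.log (1 / x) ≠ 0 := by
    rw [one_div, Real.log_inv]
    positivity
  apply ContinuousAt.continuousWithinAt
  have : ContinuousAt (fun y : ℝ => y * Real.log (1 / y)) x :=
    continuousAt_id.mul ((Real.continuousAt_log (by positivity)).comp
      (continuousAt_const.div continuousAt_id hx0.ne'))
  exact continuousAt_const.div this hden

lemma esn_ftc {a b : ℝ} (ha : 0 < a) (hab : a ≤ b) (hb : b < 1) :
    ∫ v in a..b, esnF v = Real.log (-Real.log a) - Real.log (-Real.log b) := by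
  have key := intervalIntegral.integral_eq_sub_of_hasDerivAt
    (f := fun y => -Real.log (-Real.log y)) (f' := esnF) (a := a) (b := b)
    (fun x hx => by
      rw [Set.uIcc_of_le hab] at hx
      exact esn_hasDerivAt (lt_of_lt_of_le ha hx.1) (lt_of_le_of_lt hx.2 hb))
    (((esn_contOn ha hb).mono (by rw [Set.uIcc_of_le hab])).intervalIntegrable)
  rw [key]; ring

lemma esn_integrableOn_Ioc {a : ℝ} (ha : 0 < a) :
    IntegrableOn esnG (Set.Ioc a (Real.exp (-1))) := by
  rcases le_or_gt (Real.exp (-1)) a with h | h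
  · rw [Set.Ioc_eq_empty (not_lt.2 h)]; exact integrableOn_empty
  · rw [integrableOn_Ioc_iff_integrableOn_Ioo]
    have hf : IntegrableOn esnF (Set.Ioo a (Real.exp (-1))) :=
      ((esn_contOn ha esn_c_lt_one).integrableOn_Icc).mono_set Set.Ioo_subset_Icc_self
    exact hf.congr_fun (fun x hx => (if_pos hx.2).symm) measurableSet_Ioo

lemma esn_setIntegral_Ioc {a : ℝ} (ha : 0 < a) (hac : a ≤ Real.exp (-1)) :
    ∫ x in Set.Ioc a (Real.exp (-1)), esnG x = Real.log (-Real.log a) := by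
  have hcg : ∫ x in Set.Ioo a (Real.exp (-1)), esnG x
      = ∫ x in Set.Ioo a (Real.exp (-1)), esnF x :=
    setIntegral_congr_fun (f := esnG) (g := esnF) measurableSet_Ioo
      (fun x hx => if_pos hx.2)
  rw [integral_Ioc_eq_integral_Ioo, hcg, ← integral_Ioc_eq_integral_Ioo,
    ← intervalIntegral.integral_of_le hac, esn_ftc ha hac esn_c_lt_one]
  simp [Real.log_exp]

lemma esn_zero_of_ge {x : ℝ} (hx : Real.exp (-1) ≤ x) : esnG x = 0 :=
  if_neg (not_lt.2 hx)

lemma esn_int_neg_log : IntegrableOn (fun x => -Real.log x) (Set.Ioc (0:ℝ) 1) := by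
  apply intervalIntegral.integrableOn_deriv_of_nonneg
    (g := fun x => x + Real.negMulLog x)
    (hcont := (continuous_id.add Real.continuous_negMulLog).continuousOn)
  · intro x hx
    have h := (hasDerivAt_id x).add (Real.hasDerivAt_negMulLog hx.1.ne')
    refine h.congr_deriv ?_
    ring
  · intro x hx
    have := Real.log_nonpos hx.1.le hx.2.le
    linarith

theorem esn_loglog_example
    (μbar : ℝ → ℝ)
    (hμ : ∀ x, μbar x =
      if x < Real.exp (-1) then 1 / (x * Real.log (1 / x)) else 0) :
    Tendsto μbar (nhdsWithin 0 (Set.Ioi 0)) atTop ∧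
    ¬ IntegrableOn μbar (Set.Ioc 0 (Real.exp (-1))) ∧
    IntegrableOn (fun s => Real.exp (∫ v in s..1, μbar v)) (Set.Ioc 0 1) ∧
    (∀ x : ℝ, 0 < x → x ≤ Real.exp (-1) →
      Real.exp (-(∫ v in Set.Ioi x, μbar v)) = 1 / Real.log (1 / x)) := by
  have hμG : μbar = esnG := funext hμ
  subst hμG
  have hc0 := esn_c_pos
  have hc1 := esn_c_lt_one
  -- computation of ∫ c..1 esnG = 0 and interval integrability there
  have hIocC1 : IntegrableOn esnG (Set.Ioc (Real.exp (-1)) 1) := by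
    exact (integrableOn_zero : IntegrableOn (fun _ : ℝ => (0:ℝ)) _ _).congr_fun
      (fun x hx => (esn_zero_of_ge hx.1.le).symm) measurableSet_Ioc
  have hintC1 : IntervalIntegrable esnG volume (Real.exp (-1)) 1 :=
    (intervalIntegrable_iff_integrableOn_Ioc_of_le hc1.le).2 hIocC1
  have hzero : ∀ s : ℝ, Real.exp (-1) ≤ s → s ≤ 1 → (∫ v in s..1, esnG v) = 0 := by
    intro s hs hs1
    rw [intervalIntegral.integral_of_le hs1,
      setIntegral_congr_fun measurableSet_Ioc
        (g := fun _ => (0:ℝ)) (fun x hx => esn_zero_of_ge (le_trans hs hx.1.le))]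
    simp
  refine ⟨?_, ?_, ?_, ?_⟩
  -- Part 1
  · have h0 : Tendsto (fun x : ℝ => x * Real.log (1 / x)) (𝓝[>] 0) (𝓝 0) := by
      have h := tendsto_log_mul_rpow_nhdsGT_zero (r := 1) one_pos
      simp only [Real.rpow_one] at h
      have h' := h.neg
      rw [neg_zero] at h'
      refine h'.congr' ?_
      filter_upwards [self_mem_nhdsWithin] with x hx
      rw [one_div, Real.log_inv]
      ring
    have hpos : ∀ᶠ x in 𝓝[>] (0:ℝ), x * Real.log (1 / x) ∈ Set.Ioi (0:ℝ) := by
      filter_upwards [Ioo_mem_nhdsGT_of_mem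
        (Set.mem_Ico.2 ⟨le_refl (0:ℝ), one_pos⟩)] with x hx
      have hlx : 0 < Real.log (1 / x) := by
        rw [one_div, Real.log_inv]
        have := Real.log_neg hx.1 hx.2
        linarith
      exact mul_pos hx.1 hlx
    have hd : Tendsto (fun x : ℝ => x * Real.log (1 / x)) (𝓝[>] 0) (𝓝[>] 0) :=
      tendsto_nhdsWithin_of_tendsto_nhds_of_eventually_within _ h0 hpos
    have hF : Tendsto esnF (𝓝[>] (0:ℝ)) atTop := by
      have := tendsto_inv_nhdsGT_zero.comp hd
      refine this.congr fun x => ?_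
      simp [esnF, one_div]
    refine hF.congr' ?_
    exact Filter.eventuallyEq_of_mem
      (Ioo_mem_nhdsGT_of_mem (Set.mem_Ico.2 ⟨le_refl (0:ℝ), hc0⟩))
      fun x hx => (if_pos hx.2).symm
  -- Part 2
  · intro H
    set C := ∫ x in Set.Ioc (0:ℝ) (Real.exp (-1)), |esnG x| with hC
    have hC0 : 0 ≤ C := integral_nonneg fun x => abs_nonneg _
    set a := Real.exp (-(Real.exp (C + 1))) with ha
    have ha0 : 0 < a := Real.exp_pos _
    have hac : a ≤ Real.exp (-1) := by
      apply Real.exp_le_exp.2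
      have : (1:ℝ) ≤ Real.exp (C + 1) := Real.one_le_exp (by linarith)
      linarith
    have hval : ∫ x in Set.Ioc a (Real.exp (-1)), esnG x = C + 1 := by
      rw [esn_setIntegral_Ioc ha0 hac, ha, Real.log_exp, neg_neg, Real.log_exp]
    have hle : ∫ x in Set.Ioc a (Real.exp (-1)), esnG x ≤ C := by
      calc ∫ x in Set.Ioc a (Real.exp (-1)), esnG x
          ≤ |∫ x in Set.Ioc a (Real.exp (-1)), esnG x| := le_abs_self _
        _ ≤ ∫ x in Set.Ioc a (Real.exp (-1)), |esnG x| := by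
            simpa [Real.norm_eq_abs] using
              norm_integral_le_integral_norm
                (μ := volume.restrict (Set.Ioc a (Real.exp (-1)))) esnG
        _ ≤ C := by
            rw [hC]
            exact setIntegral_mono_set H.abs
              (Filter.Eventually.of_forall fun x => abs_nonneg _)
              (HasSubset.Subset.eventuallyLE (Set.Ioc_subset_Ioc_left ha0.le))
    rw [hval] at hle
    linarith
  -- Part 3
  · rw [← Set.Ioc_union_Ioc_eq_Ioc hc0.le hc1.le]
    apply IntegrableOn.union
    · have hnl : IntegrableOn (fun s => -Real.log s) (Set.Ioc (0:ℝ) (Real.exp (-1))) :=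
        esn_int_neg_log.mono_set (Set.Ioc_subset_Ioc_right hc1.le)
      refine hnl.congr_fun (fun s hs => ?_) measurableSet_Ioc
      have hs0 : 0 < s := hs.1
      have hsc : s ≤ Real.exp (-1) := hs.2
      have hs1 : s < 1 := lt_of_le_of_lt hsc hc1
      have hint1 : IntervalIntegrable esnG volume s (Real.exp (-1)) :=
        (intervalIntegrable_iff_integrableOn_Ioc_of_le hsc).2 (esn_integrableOn_Ioc hs0)
      have hsplit := intervalIntegral.integral_add_adjacent_intervals hint1 hintC1
      have hlogs : 0 < -Real.log s := by
        have := Real.log_neg hs0 hs1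
        linarith
      have : (∫ v in s..1, esnG v) = Real.log (-Real.log s) := by
        rw [← hsplit, hzero _ le_rfl hc1.le, add_zero,
          intervalIntegral.integral_of_le hsc, esn_setIntegral_Ioc hs0 hsc]
      rw [this, Real.exp_log hlogs]
    · refine (integrableOn_const (C := (1:ℝ))
        measure_Ioc_lt_top.ne).congr_fun (fun s hs => ?_) measurableSet_Ioc
      rw [hzero s hs.1.le hs.2, Real.exp_zero]
  -- Part 4
  · intro x hx0 hxc
    have hIoiInt : IntegrableOn esnG (Set.Ioi (Real.exp (-1))) :=
      (integrableOn_zero : IntegrableOn (fun _ : ℝ => (0:ℝ)) _ _).congr_fun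
        (fun y hy => (esn_zero_of_ge (le_of_lt hy)).symm) measurableSet_Ioi
    have hIoiZero : ∫ y in Set.Ioi (Real.exp (-1)), esnG y = 0 := by
      rw [setIntegral_congr_fun measurableSet_Ioi
        (g := fun _ => (0:ℝ)) (fun y hy => esn_zero_of_ge (le_of_lt hy))]
      simp
    rw [← Set.Ioc_union_Ioi_eq_Ioi hxc,
      setIntegral_union (Set.Ioc_disjoint_Ioi le_rfl) measurableSet_Ioi
        (esn_integrableOn_Ioc hx0) hIoiInt,
      hIoiZero, add_zero, esn_setIntegral_Ioc hx0 hxc]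
    have hlx : 0 < -Real.log x := by
      have := Real.log_neg hx0 (lt_of_le_of_lt hxc hc1)
      linarith
    rw [Real.exp_neg, Real.exp_log hlx, one_div, one_div, Real.log_inv]
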